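/- Let S be an involutive algebra anti-automorphism of M_n(ℂ) ⊕ M_n(ℂ) that interchanges the two minimal central projections (1,0) and (0,1). Then there exists an invertible u ∈ M_n(ℂ) such that S(x ⊕ y) = u yᵀ u⁻¹ ⊕ uᵀ xᵀ (uᵀ)⁻¹ for all x, y. -/

import Mathlib

open Matrix

theorem skolem_aux (n : ℕ) [NeZero n]
    (Φ : Matrix (Fin n) (Fin n) ℂ →ₗ[ℂ] Matrix (Fin n) (Fin n) ℂ)
    (hΦmul : ∀ a b, Φ (a * b) = Φ a * Φ b) (hΦinj : Function.Injective Φ) :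
    ∃ u : Matrix (Fin n) (Fin n) ℂ, IsUnit u ∧ ∀ a, Φ a * u = u * a := by
  haveI : NeZero n := ‹_›
  set E : Fin n → Fin n → Matrix (Fin n) (Fin n) ℂ := fun i j => Matrix.single i j 1 with hE
  have hEmul : ∀ i j k l, E i j * E k l = if j = k then E i l else 0 := by
    intro i j k l
    by_cases h : j = k
    · subst h; simp [hE, Matrix.single_mul_single_same]
    · simp [hE, Matrix.single_mul_single_of_ne (h := h), h]
  set e := Φ (E 0 0) with he
  have hee : e * e = e := by rw [he, ← hΦmul]; simp [hEmul]
  have hene : e ≠ 0 := by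
    intro h
    have : E 0 0 = 0 := hΦinj (by rw [← he, h, map_zero])
    have := congrFun (congrFun this 0) 0
    simp [hE] at this
  obtain ⟨j0, i0, hji⟩ : ∃ j i, e j i ≠ 0 := by
    by_contra h
    push_neg at h
    exact hene (by ext j i; simp [h j i])
  set w : Fin n → ℂ := fun j => e j i0 with hwdef
  have hw0 : w j0 ≠ 0 := hji
  have hew : e *ᵥ w = w := by
    funext j
    have : (e *ᵥ w) j = (e * e) j i0 := by
      simp [mulVec, dotProduct, mul_apply, hwdef]
    rw [this, hee]
  set u : Matrix (Fin n) (Fin n) ℂ := Matrix.of fun j i => (Φ (E i 0) *ᵥ w) j with hu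
  have hcol : ∀ i, u *ᵥ Pi.single i 1 = Φ (E i 0) *ᵥ w := by
    intro i
    funext j
    simp [mulVec_single, hu]
  have key : ∀ k l, Φ (E k l) * u = u * E k l := by
    intro k l
    ext j i
    have hL : (Φ (E k l) * u) j i = (Φ (E k l * E i 0) *ᵥ w) j := by
      rw [hΦmul, ← mulVec_mulVec]
      simp [mul_apply, mulVec, dotProduct, hu]
    have hR : (u * E k l) j i = if l = i then u j k else 0 := by
      simp only [hE, mul_apply, Matrix.single, of_apply, mul_ite, mul_one, mul_zero,
        ite_and, Finset.sum_ite_eq', Finset.mem_univ, if_true]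
      by_cases h : l = i <;> simp [h]
    rw [hL, hR, hEmul]
    by_cases h : l = i
    · subst h; simp [hu]
    · simp [h]
  have keyall : ∀ a, Φ a * u = u * a := by
    intro a
    rw [matrix_eq_sum_single a]
    simp only [map_sum, Finset.sum_mul, Finset.mul_sum]
    refine Finset.sum_congr rfl fun k _ => Finset.sum_congr rfl fun l _ => ?_
    have hs : Matrix.single k l (a k l) = a k l • E k l := by
      rw [hE, smul_single, smul_eq_mul, mul_one]
    rw [hs, Φ.map_smul, smul_mul_assoc, mul_smul_comm, key]
  have hker : ∀ c, u *ᵥ c = 0 → c = 0 := by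
    intro c hc
    funext l
    have h1 : Φ (E 0 l) *ᵥ (u *ᵥ c) = 0 := by rw [hc, mulVec_zero]
    rw [mulVec_mulVec, keyall, ← mulVec_mulVec] at h1
    have h2 : E 0 l *ᵥ c = c l • (Pi.single (0 : Fin n) (1:ℂ) : Fin n → ℂ) := by
      funext m
      simp only [hE, mulVec, dotProduct, Matrix.single, of_apply, ite_mul, one_mul,
        zero_mul, ite_and, Finset.sum_ite_eq', Finset.mem_univ, if_true, Pi.smul_apply,
        Pi.single_apply, smul_eq_mul]
      rcases eq_or_ne m 0 with h | h
      · subst h; simp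
      · simp [h, h.symm]
    rw [h2, mulVec_smul, hcol 0, ← he, hew] at h1
    have h3 := congrFun h1 j0
    simp only [Pi.smul_apply, smul_eq_mul, Pi.zero_apply] at h3
    exact (mul_eq_zero.mp h3).resolve_right hw0
  have hinj : Function.Injective u.mulVec := by
    intro c d hcd
    have h4 : u *ᵥ (c - d) = 0 := by rw [mulVec_sub, hcd, sub_self]
    exact sub_eq_zero.mp (hker _ h4)
  exact ⟨u, mulVec_injective_iff_isUnit.mp hinj, keyall⟩

abbrev MM (n : ℕ) := Matrix (Fin n) (Fin n) ℂ

theorem stmt11 (n : ℕ)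
    (S : (Matrix (Fin n) (Fin n) ℂ × Matrix (Fin n) (Fin n) ℂ) →ₗ[ℂ]
         (Matrix (Fin n) (Fin n) ℂ × Matrix (Fin n) (Fin n) ℂ))
    (hmul : ∀ x y, S (x * y) = S y * S x) (hinvol : ∀ x, S (S x) = x)
    (hswap : S (1, 0) = (0, 1)) :
    ∃ u : Matrix (Fin n) (Fin n) ℂ, IsUnit u ∧
      ∀ x y, S (x, y) = (u * yᵀ * u⁻¹, uᵀ * xᵀ * (uᵀ)⁻¹) := by
  rcases eq_or_ne n 0 with hn | hn
  · subst hn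
    exact ⟨1, isUnit_one, fun x y => Subsingleton.elim _ _⟩
  haveI : NeZero n := ⟨hn⟩
  have hswap' : S (0, 1) = (1, 0) := by rw [← hswap, hinvol]
  have hx0 : ∀ x : MM n, S (x, 0) = (0, (S (x, 0)).2) := by
    intro x
    have h : ((x, 0) : MM n × MM n) = ((x, 0) : MM n × MM n) * ((1, 0) : MM n × MM n) := by
      ext <;> simp
    rw [h, hmul, hswap]
    exact Prod.ext (by simp [Prod.fst_mul]) rfl
  have h0y : ∀ y : MM n, S (0, y) = ((S (0, y)).1, 0) := by
    intro y
    have h : ((0, y) : MM n × MM n) = ((0, y) : MM n × MM n) * ((0, 1) : MM n × MM n) := by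
      ext <;> simp
    rw [h, hmul, hswap']
    exact Prod.ext rfl (by simp [Prod.snd_mul])
  set Φ : MM n →ₗ[ℂ] MM n :=
    { toFun := fun a => (S (0, aᵀ)).1
      map_add' := by
        intro a b
        show (S ((0, (a + b)ᵀ) : MM n × MM n)).1 =
          (S ((0, aᵀ) : MM n × MM n)).1 + (S ((0, bᵀ) : MM n × MM n)).1
        have h : ((0, (a + b)ᵀ) : MM n × MM n) = ((0, aᵀ) : MM n × MM n) + ((0, bᵀ) : MM n × MM n) := by
          ext <;> simp
        rw [h, map_add]; rfl
      map_smul' := by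
        intro c a
        show (S ((0, (c • a)ᵀ) : MM n × MM n)).1 = c • (S ((0, aᵀ) : MM n × MM n)).1
        have h : ((0, (c • a)ᵀ) : MM n × MM n) = c • ((0, aᵀ) : MM n × MM n) := by
          ext <;> simp
        rw [h, S.map_smul]; rfl } with hΦdef
  have hΦ : ∀ a, Φ a = (S (0, aᵀ)).1 := fun a => rfl
  have hΦmul : ∀ a b, Φ (a * b) = Φ a * Φ b := by
    intro a b
    have h : ((0, (a * b)ᵀ) : MM n × MM n) = ((0, bᵀ) : MM n × MM n) * ((0, aᵀ) : MM n × MM n) := by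
      rw [Prod.mk_mul_mk, mul_zero, transpose_mul]
    rw [hΦ, h, hmul, Prod.fst_mul, ← hΦ, ← hΦ]
  have hΦinj : Function.Injective Φ := by
    intro a b hab
    have h1 : S (0, aᵀ) = S (0, bᵀ) := by
      rw [h0y aᵀ, h0y bᵀ, ← hΦ, ← hΦ, hab]
    have h2 : ((0, aᵀ) : MM n × MM n) = ((0, bᵀ) : MM n × MM n) := by
      rw [← hinvol (0, aᵀ), h1, hinvol]
    have h3 : aᵀ = bᵀ := congrArg Prod.snd h2
    simpa using congrArg transpose h3
  obtain ⟨u, hu, hcomm⟩ := skolem_aux n Φ hΦmul hΦinj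
  have hud : IsUnit u.det := (isUnit_iff_isUnit_det u).mp hu
  have huu : u * u⁻¹ = 1 := mul_nonsing_inv u hud
  have huu' : u⁻¹ * u = 1 := nonsing_inv_mul u hud
  have hΦval : ∀ a, Φ a = u * a * u⁻¹ := by
    intro a
    calc Φ a = Φ a * (u * u⁻¹) := by rw [huu, mul_one]
    _ = (Φ a * u) * u⁻¹ := by rw [mul_assoc]
    _ = u * a * u⁻¹ := by rw [hcomm]
  refine ⟨u, hu, fun x y => ?_⟩
  have hsplit : S (x, y) = S (x, 0) + S (0, y) := by
    rw [← map_add]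
    congr 1
    ext <;> simp
  have hfst : (S (x, y)).1 = u * yᵀ * u⁻¹ := by
    have h6 : (S (x, y)).1 = (S (x, 0)).1 + (S (0, y)).1 := by rw [hsplit]; rfl
    have h7 : (S (x, 0)).1 = 0 := by rw [hx0]
    have h8 : (S (0, y)).1 = Φ yᵀ := by rw [hΦ, transpose_transpose]
    rw [h6, h7, h8, hΦval, zero_add]
  have hsnd : (S (x, y)).2 = uᵀ * xᵀ * (uᵀ)⁻¹ := by
    have h1 : (S (x, y)).2 = (S (x, 0)).2 := by
      have h9 : (S (x, y)).2 = (S (x, 0)).2 + (S (0, y)).2 := by rw [hsplit]; rfl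
      have h10 : (S (0, y)).2 = 0 := by rw [h0y]
      rw [h9, h10, add_zero]
    have h2 : Φ ((S (x, 0)).2)ᵀ = x := by
      rw [hΦ, transpose_transpose]
      have h3 : S (0, (S (x, 0)).2) = (x, 0) := by
        rw [← hx0 x, hinvol]
      rw [h3]
    rw [hΦval] at h2
    have h4 : ((S (x, 0)).2)ᵀ = u⁻¹ * x * u := by
      calc ((S (x, 0)).2)ᵀ = (u⁻¹ * u) * ((S (x, 0)).2)ᵀ * (u⁻¹ * u) := by
            rw [huu', Matrix.one_mul, Matrix.mul_one]
        _ = u⁻¹ * (u * ((S (x, 0)).2)ᵀ * u⁻¹) * u := by simp only [Matrix.mul_assoc]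
        _ = u⁻¹ * x * u := by rw [h2]
    have h5 : (S (x, 0)).2 = (u⁻¹ * x * u)ᵀ := by
      rw [← h4, transpose_transpose]
    rw [h1, h5, transpose_mul, transpose_mul, transpose_nonsing_inv, Matrix.mul_assoc]
  exact Prod.ext hfst hsnd
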